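/- Let V be a real inner product space, θ ∈ V nonzero, q ≥ 0, p ∈ ℝ, ω = 1/(1+⟨θ,θ⟩). Suppose φ ∈ V satisfies ω^p (φ + q⟨φ,θ⟩θ) = −p ω^{p+1}(⟨ξ,θ⟩η + ⟨η,θ⟩ξ) − p q ω^{p+1} ⟨ξ,θ⟩⟨η,θ⟩θ + ω^p (pω + q)⟨ξ,η⟩θ for given ξ, η ∈ V. Then φ = −pω(⟨ξ,θ⟩η + ⟨η,θ⟩ξ) + (ν⟨ξ,θ⟩⟨η,θ⟩ + μ⟨ξ,η⟩)θ, where μ = (q+pω)/(q⟨θ,θ⟩+1) and ν = pqω/(q⟨θ,θ⟩+1). -/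

import Mathlib

theorem stmt_13 {V : Type*} [NormedAddCommGroup V] [InnerProductSpace ℝ V]
    (p q : ℝ) (hq : 0 ≤ q) (θ : V) (hθ : θ ≠ 0) (ξ η φ : V)
    (h : (((1 / (1 + (inner ℝ θ θ : ℝ))) ^ p : ℝ)) • (φ + (q * (inner ℝ φ θ : ℝ)) • θ) =
        (-(p * (1 / (1 + (inner ℝ θ θ : ℝ))) ^ (p + 1))) •
            ((inner ℝ ξ θ : ℝ) • η + (inner ℝ η θ : ℝ) • ξ)
        + (-(p * q * (1 / (1 + (inner ℝ θ θ : ℝ))) ^ (p + 1) *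
            (inner ℝ ξ θ : ℝ) * (inner ℝ η θ : ℝ))) • θ
        + (((1 / (1 + (inner ℝ θ θ : ℝ))) ^ p : ℝ) *
            (p * (1 / (1 + (inner ℝ θ θ : ℝ))) + q) * (inner ℝ ξ η : ℝ)) • θ) :
    φ = (-(p * (1 / (1 + (inner ℝ θ θ : ℝ))))) •
          ((inner ℝ ξ θ : ℝ) • η + (inner ℝ η θ : ℝ) • ξ)
      + ((p * q * (1 / (1 + (inner ℝ θ θ : ℝ))) / (q * (inner ℝ θ θ : ℝ) + 1)) *
            (inner ℝ ξ θ : ℝ) * (inner ℝ η θ : ℝ)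
          + ((q + p * (1 / (1 + (inner ℝ θ θ : ℝ)))) / (q * (inner ℝ θ θ : ℝ) + 1)) *
            (inner ℝ ξ η : ℝ)) • θ := by
  set t : ℝ := inner ℝ θ θ with ht_def
  set a : ℝ := inner ℝ ξ θ with ha_def
  set b : ℝ := inner ℝ η θ with hb_def
  set c : ℝ := inner ℝ ξ η with hc_def
  have ht : 0 < t :=
    lt_of_le_of_ne real_inner_self_nonneg
      (fun hh => hθ ((@inner_self_eq_zero ℝ _ _ _ _ θ).mp hh.symm))
  have h1 : (0:ℝ) < 1 + t := by linarith
  set ω : ℝ := 1 / (1 + t) with hω_def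
  have hω : 0 < ω := by positivity
  have hωp : (0:ℝ) < ω ^ p := Real.rpow_pos_of_pos hω p
  have hpow : ω ^ (p + 1) = ω ^ p * ω := by
    rw [Real.rpow_add hω, Real.rpow_one]
  rw [hpow] at h
  have h2 : φ + (q * (inner ℝ φ θ : ℝ)) • θ =
      (-(p * ω)) • (a • η + b • ξ) + (-(p * q * ω * a * b)) • θ
        + ((p * ω + q) * c) • θ := by
    apply smul_right_injective V (ne_of_gt hωp)
    show ω ^ p • _ = ω ^ p • _
    rw [h]
    simp only [smul_add, smul_smul]
    ring_nf
  have h3 : (inner ℝ (φ + (q * (inner ℝ φ θ : ℝ)) • θ) θ : ℝ) =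
      inner ℝ ((-(p * ω)) • (a • η + b • ξ) + (-(p * q * ω * a * b)) • θ
        + ((p * ω + q) * c) • θ) θ := by rw [h2]
  simp only [inner_add_left, real_inner_smul_left, ← ht_def, ← ha_def, ← hb_def] at h3
  have hqt : (0:ℝ) < q * t + 1 := by nlinarith
  have hφθ : (inner ℝ φ θ : ℝ) =
      (-(p * ω) * (a * b + b * a) + -(p * q * ω * a * b) * t + (p * ω + q) * c * t)
        / (q * t + 1) := by
    field_simp
    linarith [h3]
  have h4 : φ = (-(p * ω)) • (a • η + b • ξ) + (-(p * q * ω * a * b)) • θ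
        + ((p * ω + q) * c) • θ - (q * (inner ℝ φ θ : ℝ)) • θ := by
    rw [← h2]; abel
  rw [h4, hφθ]
  match_scalars
  · ring
  · ring
  · field_simp
    ring
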